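/- Let (X, 𝓘) be an independence system and let f : 2^X → ℝ be additive with nonnegative weights, i.e., f(S) = Σ_{s∈S} f({s}) for every S ⊆ X and f({s}) ≥ 0 for every s ∈ X. Then every greedy solution G and every optimal solution O satisfy f(G) ≥ q(X, 𝓘) · f(O). -/
import Mathlib


open Finset

variable {α : Type*} [DecidableEq α] [Fintype α]

/-- Monotone set function. -/
def SetMonotone (f : Finset α → ℝ) : Prop :=
  ∀ ⦃A B : Finset α⦄, A ⊆ B → f A ≤ f B

/-- Submodular set function. -/
def SetSubmodular (f : Finset α → ℝ) : Prop :=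
  ∀ ⦃A B : Finset α⦄, A ⊆ B → ∀ j ∉ B, f (insert j A) - f A ≥ f (insert j B) - f B

/-- Polymatroid set function: monotone, submodular, and `f ∅ = 0`. -/
def PolymatroidFn (f : Finset α → ℝ) : Prop :=
  SetMonotone f ∧ SetSubmodular f ∧ f ∅ = 0

/-- Hereditary collection of sets. -/
def Hereditary (I : Finset α → Prop) : Prop :=
  ∀ ⦃B⦄, I B → ∀ ⦃A⦄, A ⊆ B → I A

/-- Independence system: nonempty hereditary collection. -/
def IndepSystem (I : Finset α → Prop) : Prop :=
  (∃ S, I S) ∧ Hereditary I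

/-- Augmentation property. -/
def Augmentation (I : Finset α → Prop) : Prop :=
  ∀ ⦃A B⦄, I A → I B → A.card < B.card → ∃ j ∈ B, j ∉ A ∧ I (insert j A)

/-- Matroid: independence system with augmentation. -/
def IsMatroid (I : Finset α → Prop) : Prop :=
  IndepSystem I ∧ Augmentation I

/-- One step of the greedy algorithm: add a feasible element of largest gain. -/
def GreedyStep (I : Finset α → Prop) (f : Finset α → ℝ) (S S' : Finset α) : Prop :=
  ∃ a ∉ S, I (insert a S) ∧ S' = insert a S ∧
    ∀ b ∉ S, I (insert b S) → f (insert b S) ≤ f (insert a S)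

/-- Greedy solution: obtained from `∅` by greedy steps, and no further feasible addition. -/
def IsGreedy (I : Finset α → Prop) (f : Finset α → ℝ) (G : Finset α) : Prop :=
  Relation.ReflTransGen (GreedyStep I f) ∅ G ∧ ∀ a ∉ G, ¬ I (insert a G)

/-- Optimal solution: member of the constraint maximizing `f`. -/
def IsOptimal (I : Finset α → Prop) (f : Finset α → ℝ) (O : Finset α) : Prop :=
  I O ∧ ∀ S, I S → f S ≤ f O

/-- `B` is a basis of `S`: a maximal independent subset of `S`. -/
def IsBasisOf (I : Finset α → Prop) (S B : Finset α) : Prop :=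
  B ⊆ S ∧ I B ∧ ∀ ⦃B' : Finset α⦄, I B' → B ⊆ B' → B' ⊆ S → B' = B

/-- Lower rank of `S`: minimum cardinality of a basis of `S`. -/
noncomputable def lr (I : Finset α → Prop) (S : Finset α) : ℕ :=
  sInf {n : ℕ | ∃ B, IsBasisOf I S B ∧ B.card = n}

/-- Upper rank of `S`: maximum cardinality of a basis of `S`. -/
noncomputable def ur (I : Finset α → Prop) (S : Finset α) : ℕ :=
  sSup {n : ℕ | ∃ B, IsBasisOf I S B ∧ B.card = n}

/-- Rank quotient `q(X, 𝓘)`. -/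
noncomputable def rankQuotient (I : Finset α → Prop) : ℝ :=
  sInf {x : ℝ | ∃ S : Finset α, 0 < ur I S ∧ x = (lr I S : ℝ) / (ur I S : ℝ)}

/-- Total curvature `c(f)`. -/
noncomputable def totalCurvature (f : Finset α → ℝ) : ℝ :=
  sSup {x : ℝ | ∃ j : α, f {j} ≠ f ∅ ∧
    x = 1 - (f Finset.univ - f (Finset.univ.erase j)) / (f {j} - f ∅)}

/-- Partial curvature `b(f)`, over pairs `(j, A)` with `j ∈ A ∈ 𝓘`. -/
noncomputable def partialCurvature (I : Finset α → Prop) (f : Finset α → ℝ) : ℝ :=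
  sSup {x : ℝ | ∃ (j : α) (A : Finset α), I A ∧ j ∈ A ∧ f {j} ≠ f ∅ ∧
    x = 1 - (f A - f (A.erase j)) / (f {j} - f ∅)}

/-- Total `k`-batch curvature `c_k`. -/
noncomputable def batchCurvature (f : Finset α → ℝ) (k : ℕ) : ℝ :=
  sSup {x : ℝ | ∃ J : Finset α, J.card = k ∧ f J ≠ f ∅ ∧
    x = 1 - (f Finset.univ - f (Finset.univ \ J)) / (f J - f ∅)}

/-- Polymatroid function defined on a collection `𝓘`. -/
def PolymatroidOn (I : Finset α → Prop) (f : Finset α → ℝ) : Prop :=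
  f ∅ = 0 ∧ (∀ ⦃A B : Finset α⦄, A ⊆ B → I B → f A ≤ f B) ∧
    ∀ ⦃A B : Finset α⦄, A ⊆ B → ∀ j ∉ B, I (insert j B) →
      f (insert j A) - f A ≥ f (insert j B) - f B

/-- One step of the batched greedy algorithm: add a feasible batch of size `k`
of largest gain. -/
def BatchStep (I : Finset α → Prop) (f : Finset α → ℝ) (k : ℕ) (S S' : Finset α) : Prop :=
  ∃ J : Finset α, Disjoint J S ∧ J.card = k ∧ I (S ∪ J) ∧ S' = S ∪ J ∧
    ∀ J' : Finset α, Disjoint J' S → J'.card = k → I (S ∪ J') → f (S ∪ J') ≤ f (S ∪ J)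

/-- `k`-batch greedy solution: `l - 1` batches of size `k` followed by one batch of
size `m`. -/
def IsBatchGreedy (I : Finset α → Prop) (f : Finset α → ℝ) (k l m : ℕ)
    (S : Finset α) : Prop :=
  ∃ T : ℕ → Finset α, T 0 = ∅ ∧ (∀ t < l - 1, BatchStep I f k (T t) (T (t + 1))) ∧
    BatchStep I f m (T (l - 1)) S

/-- Any independent subset of `S` extends to a basis of `S`. -/
private lemma exists_basis_superset_aux {α : Type*} [DecidableEq α]
    (I : Finset α → Prop) (hher : Hereditary I) (S : Finset α) :
    ∀ n (A : Finset α), S.card - A.card ≤ n → I A → A ⊆ S →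
      ∃ B, IsBasisOf I S B ∧ A ⊆ B := by
  intro n
  induction n with
  | zero =>
      intro A hn hA hAS
      refine ⟨A, ⟨hAS, hA, ?_⟩, Finset.Subset.refl A⟩
      intro B' hB' hAB hBS
      have hle := Finset.card_le_card hAS
      have : A = S := Finset.eq_of_subset_of_card_le hAS (by omega)
      exact Finset.Subset.antisymm (this ▸ hBS) hAB
  | succ n ih =>
      intro A hn hA hAS
      by_cases hmax : ∀ B', I B' → A ⊆ B' → B' ⊆ S → B' = A
      · exact ⟨A, ⟨hAS, hA, hmax⟩, Finset.Subset.refl A⟩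
      · push_neg at hmax
        obtain ⟨B', hB', hAB, hBS, hne⟩ := hmax
        obtain ⟨x, hxB, hxA⟩ : ∃ x ∈ B', x ∉ A := by
          by_contra hc; push_neg at hc
          exact hne (Finset.Subset.antisymm hc hAB)
        have hI' : I (insert x A) := hher hB' (Finset.insert_subset hxB hAB)
        have hsub : insert x A ⊆ S := Finset.insert_subset (hBS hxB) hAS
        have hcard : S.card - (insert x A).card ≤ n := by
          rw [Finset.card_insert_of_notMem hxA]
          have := Finset.card_le_card hAS
          omega
        obtain ⟨B, hB, hsub2⟩ := ih (insert x A) hcard hI' hsub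
        exact ⟨B, hB, (Finset.subset_insert x A).trans hsub2⟩

private lemma telescope_aux (W : ℕ → ℝ) (c : ℝ) (p : ℕ) (hp : W p = 0) :
    ∀ n j, j + n = p →
      min c (W j) ≤ ∑ i ∈ Finset.Ico j p, (if W (i + 1) < c then W i - W (i + 1) else 0) := by
  intro n
  induction n with
  | zero =>
      intro j hj
      have : j = p := by omega
      subst this
      simp only [Finset.Ico_self, Finset.sum_empty, hp]
      exact min_le_right _ _
  | succ n ih =>
      intro j hj
      have hjp : j < p := by omega
      rw [Finset.sum_eq_sum_Ico_succ_bot hjp]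
      have h2 := ih (j + 1) (by omega)
      by_cases h : W (j + 1) < c
      · rw [min_eq_right h.le] at h2
        have := min_le_right c (W j)
        rw [if_pos h]
        linarith
      · rw [min_eq_left (not_lt.mp h)] at h2
        have := min_le_left c (W j)
        rw [if_neg h]
        linarith

private lemma abel_aux (W : ℕ → ℝ) (p : ℕ) :
    ∑ i ∈ Finset.range p, ((i : ℝ) + 1) * (W i - W (i + 1))
      = (∑ i ∈ Finset.range p, W i) - p * W p := by
  induction p with
  | zero => simp
  | succ p ih =>
      rw [Finset.sum_range_succ, Finset.sum_range_succ (f := W), ih]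
      push_cast
      ring

private lemma greedy_chain {α : Type*} [DecidableEq α] [Fintype α]
    (I : Finset α → Prop) (f : Finset α → ℝ) (G : Finset α)
    (h : Relation.ReflTransGen (GreedyStep I f) ∅ G) :
    ∃ (p : ℕ) (P : ℕ → Finset α), P 0 = ∅ ∧ P p = G ∧
      ∀ i < p, ∃ a, a ∉ P i ∧ P (i + 1) = insert a (P i) ∧ I (P (i + 1)) ∧
        ∀ b ∉ P i, I (insert b (P i)) → f (insert b (P i)) ≤ f (P (i + 1)) := by
  induction h with
  | refl => exact ⟨0, fun _ => ∅, rfl, rfl, by omega⟩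
  | @tail S S' hchain hstep ih =>
      obtain ⟨p, P, hP0, hPp, hprop⟩ := ih
      obtain ⟨a, haS, haI, hS', hmax⟩ := hstep
      refine ⟨p + 1, fun n => if n = p + 1 then S' else P n, by simp [hP0], by simp, ?_⟩
      intro i hi
      by_cases hip : i < p
      · obtain ⟨b, h1, h2, h3, h4⟩ := hprop i hip
        refine ⟨b, ?_⟩
        simp only [if_neg (by omega : i ≠ p + 1), if_neg (by omega : i + 1 ≠ p + 1)]
        exact ⟨h1, h2, h3, h4⟩
      · have hip : i = p := by omega
        refine ⟨a, ?_⟩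
        have e1 : (if i = p + 1 then S' else P i) = S := by
          rw [if_neg (by omega), hip, hPp]
        have e2 : (if i + 1 = p + 1 then S' else P (i + 1)) = S' := if_pos (by omega)
        beta_reduce
        rw [e1, e2]
        exact ⟨haS, hS', hS' ▸ haI, fun b hb hIb => hS' ▸ hmax b hb hIb⟩

/-- Performance bound for the greedy strategy in an independence system with an
additive objective: `f(G) ≥ q(X, 𝓘) · f(O)`. -/
theorem greedy_bound_rank_quotient {α : Type*} [DecidableEq α] [Fintype α]
    (I : Finset α → Prop) (hI : IndepSystem I)
    (f : Finset α → ℝ)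
    (hadd : ∀ S : Finset α, f S = ∑ s ∈ S, f {s})
    (hnn : ∀ s : α, 0 ≤ f {s})
    (G O : Finset α) (hG : IsGreedy I f G) (hO : IsOptimal I f O) :
    f G ≥ rankQuotient I * f O := by
  classical
  obtain ⟨hchain, hstop⟩ := hG
  obtain ⟨hO1, hO2⟩ := hO
  obtain ⟨-, hher⟩ := hI
  have hf0 : f ∅ = 0 := by rw [hadd]; simp
  have hins : ∀ (x : α) (A : Finset α), x ∉ A → f (insert x A) = f {x} + f A := by
    intro x A hx
    rw [hadd (insert x A), Finset.sum_insert hx, ← hadd A]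
  have hq0 : 0 ≤ rankQuotient I := by
    apply Real.sInf_nonneg
    rintro x ⟨S, hS, rfl⟩
    positivity
  obtain ⟨p, P, hP0, hPp, hstep⟩ := greedy_chain I f G hchain
  choose g hg1 hg2 hg3 hg4 using hstep
  by_cases hp0 : p = 0
  · subst hp0
    have hG0 : G = ∅ := hPp ▸ hP0
    have hO0 : O = ∅ := by
      by_contra h
      obtain ⟨o, ho⟩ := Finset.nonempty_iff_ne_empty.mpr h
      have hIo : I (insert o G) := by
        rw [hG0]
        exact hher hO1 (Finset.singleton_subset_iff.mpr ho)
      exact hstop o (by simp [hG0]) hIo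
    rw [hO0, hf0, mul_zero, hG0, hf0]
  have hppos : 0 < p := Nat.pos_of_ne_zero hp0
  set W : ℕ → ℝ := fun i => if h : i < p then f {g i h} else 0 with hWdef
  have hWnn : ∀ i, 0 ≤ W i := by
    intro i
    by_cases h : i < p
    · rw [hWdef]; simp only [dif_pos h]; exact hnn _
    · rw [hWdef]; simp only [dif_neg h]; exact le_refl 0
  have hWp : W p = 0 := by rw [hWdef]; simp
  have hWval : ∀ i (h : i < p), W i = f {g i h} := by
    intro i h; rw [hWdef]; simp only [dif_pos h]
  have hcard : ∀ n, n ≤ p → (P n).card = n := by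
    intro n
    induction n with
    | zero => intro _; rw [hP0]; simp
    | succ n ih =>
        intro hn
        have hn' : n < p := by omega
        rw [hg2 n hn', Finset.card_insert_of_notMem (hg1 n hn'), ih (by omega)]
  have hfP : ∀ n, n ≤ p → f (P n) = ∑ i ∈ Finset.range n, W i := by
    intro n
    induction n with
    | zero => intro _; rw [hP0, hf0]; simp
    | succ n ih =>
        intro hn
        have hn' : n < p := by omega
        rw [Finset.sum_range_succ, hg2 n hn', hins _ _ (hg1 n hn'), ih (by omega),
          hWval n hn']
        ring
  have hfG : f G = ∑ i ∈ Finset.range p, W i := by rw [← hPp]; exact hfP p le_rfl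
  have hWmono : ∀ i, W (i + 1) ≤ W i := by
    intro i
    by_cases h1 : i + 1 < p
    · have hi : i < p := by omega
      have hnot : g (i + 1) h1 ∉ P i := by
        intro hmem
        exact hg1 (i + 1) h1 (by rw [hg2 i hi]; exact Finset.mem_insert_of_mem hmem)
      have hind : I (insert (g (i + 1) h1) (P i)) := by
        apply hher (hg3 (i + 1) h1)
        rw [hg2 (i + 1) h1, hg2 i hi]
        exact Finset.insert_subset_insert _ (Finset.subset_insert _ _)
      have h5 := hg4 i hi _ hnot hind
      rw [hg2 i hi, hins _ _ (hg1 i hi), hins _ _ hnot] at h5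
      rw [hWval (i + 1) h1, hWval i hi]
      linarith
    · have : W (i + 1) = 0 := by rw [hWdef]; simp only [dif_neg h1]
      rw [this]; exact hWnn i
  have hW0max : ∀ o ∈ O, f {o} ≤ W 0 := by
    intro o ho
    have hnot : o ∉ P 0 := by rw [hP0]; exact Finset.notMem_empty o
    have hIo : I (insert o (P 0)) := by
      rw [hP0]
      exact hher hO1 (Finset.singleton_subset_iff.mpr ho)
    have h5 := hg4 0 hppos o hnot hIo
    rw [hins _ _ hnot, hP0, hf0, hg2 0 hppos, hins _ _ (hg1 0 hppos), hP0, hf0,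
      ← hWval 0 hppos] at h5
    linarith
  -- the candidate sets
  have hbasis : ∀ i (hi : i < p),
      IsBasisOf I (P (i + 1) ∪ O.filter (fun x => W (i + 1) < f {x})) (P (i + 1)) := by
    intro i hi
    refine ⟨Finset.subset_union_left, hg3 i hi, ?_⟩
    intro B' hB' hPB hBS
    refine Finset.Subset.antisymm ?_ hPB
    intro x hx
    by_contra hxP
    have hxO : x ∈ O.filter (fun x => W (i + 1) < f {x}) := by
      rcases Finset.mem_union.mp (hBS hx) with h | h
      · exact absurd h hxP
      · exact h
    have hxw : W (i + 1) < f {x} := (Finset.mem_filter.mp hxO).2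
    have hIx : I (insert x (P (i + 1))) := hher hB' (Finset.insert_subset hx hPB)
    by_cases h1 : i + 1 < p
    · have h5 := hg4 (i + 1) h1 x hxP hIx
      rw [hg2 (i + 1) h1, hins _ _ (hg1 (i + 1) h1), hins _ _ hxP,
        ← hWval (i + 1) h1] at h5
      linarith
    · have hip : i + 1 = p := by omega
      have hxG : x ∉ G := by rw [← hPp, ← hip]; exact hxP
      exact hstop x hxG (by rwa [← hPp, ← hip])
  have hkey : ∀ i, i < p →
      rankQuotient I * ((O.filter (fun x => W (i + 1) < f {x})).card : ℝ) ≤ (i : ℝ) + 1 := by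
    intro i hi
    set S := P (i + 1) ∪ O.filter (fun x => W (i + 1) < f {x}) with hSdef
    have hlr : lr I S ≤ i + 1 := by
      have hmem : (i + 1) ∈ {n : ℕ | ∃ B, IsBasisOf I S B ∧ B.card = n} :=
        ⟨P (i + 1), hbasis i hi, hcard (i + 1) (by omega)⟩
      exact Nat.sInf_le hmem
    have hOE_I : I (O.filter (fun x => W (i + 1) < f {x})) :=
      hher hO1 (Finset.filter_subset _ _)
    obtain ⟨B, hB, hsub⟩ := exists_basis_superset_aux I hher S S.card
      (O.filter (fun x => W (i + 1) < f {x})) (by omega) hOE_I Finset.subset_union_right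
    have hbdd : BddAbove {n : ℕ | ∃ B, IsBasisOf I S B ∧ B.card = n} := by
      refine ⟨S.card, ?_⟩
      rintro n ⟨B', hB', rfl⟩
      exact Finset.card_le_card hB'.1
    have hur : B.card ≤ ur I S := le_csSup hbdd ⟨B, hB, rfl⟩
    have hb_ur : (O.filter (fun x => W (i + 1) < f {x})).card ≤ ur I S :=
      le_trans (Finset.card_le_card hsub) hur
    rcases Nat.eq_zero_or_pos (ur I S) with h0 | hpos
    · have hz : (O.filter (fun x => W (i + 1) < f {x})).card = 0 := by omega
      rw [hz]
      push_cast
      rw [mul_zero]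
      positivity
    · have hqle : rankQuotient I ≤ (lr I S : ℝ) / (ur I S : ℝ) := by
        apply csInf_le
        · refine ⟨0, ?_⟩
          rintro x ⟨S', hS', rfl⟩
          positivity
        · exact ⟨S, hpos, rfl⟩
      have hune : ((ur I S : ℝ)) ≠ 0 := by positivity
      calc rankQuotient I * ((O.filter (fun x => W (i + 1) < f {x})).card : ℝ)
          ≤ rankQuotient I * (ur I S : ℝ) := by
            apply mul_le_mul_of_nonneg_left _ hq0
            exact_mod_cast hb_ur
        _ ≤ ((lr I S : ℝ) / (ur I S : ℝ)) * (ur I S : ℝ) := by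
            apply mul_le_mul_of_nonneg_right hqle
            positivity
        _ = (lr I S : ℝ) := div_mul_cancel₀ _ hune
        _ ≤ (i : ℝ) + 1 := by exact_mod_cast hlr
  have hOsum : f O ≤ ∑ i ∈ Finset.range p,
      ((O.filter (fun x => W (i + 1) < f {x})).card : ℝ) * (W i - W (i + 1)) := by
    have hswap : ∀ i ∈ Finset.range p,
        ((O.filter (fun x => W (i + 1) < f {x})).card : ℝ) * (W i - W (i + 1))
          = ∑ o ∈ O, (if W (i + 1) < f {o} then W i - W (i + 1) else 0) := by
      intro i _
      rw [← Finset.sum_filter, Finset.sum_const, nsmul_eq_mul]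
    rw [Finset.sum_congr rfl hswap, Finset.sum_comm, hadd O]
    apply Finset.sum_le_sum
    intro o ho
    have ht := telescope_aux W (f {o}) p hWp p 0 (by omega)
    rw [min_eq_left (hW0max o ho)] at ht
    rw [Finset.range_eq_Ico]
    exact ht
  calc f G = ∑ i ∈ Finset.range p, W i := hfG
    _ = ∑ i ∈ Finset.range p, ((i : ℝ) + 1) * (W i - W (i + 1)) := by
        rw [abel_aux, hWp, mul_zero, sub_zero]
    _ ≥ ∑ i ∈ Finset.range p,
          rankQuotient I * ((O.filter (fun x => W (i + 1) < f {x})).card : ℝ)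
            * (W i - W (i + 1)) := by
        apply Finset.sum_le_sum
        intro i hi
        exact mul_le_mul_of_nonneg_right (hkey i (Finset.mem_range.mp hi))
          (sub_nonneg.mpr (hWmono i))
    _ = rankQuotient I * ∑ i ∈ Finset.range p,
          ((O.filter (fun x => W (i + 1) < f {x})).card : ℝ) * (W i - W (i + 1)) := by
        rw [Finset.mul_sum]
        exact Finset.sum_congr rfl fun i _ => mul_assoc _ _ _
    _ ≥ rankQuotient I * f O := mul_le_mul_of_nonneg_left hOsum hq0
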